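/- Let h ≥ 3, d ≥ 3. Every lattice point of Q = 2P_{h,d} ∩ {x : x_1 = 1} is either of the form a_0 + a_1 with a_0 a lattice point of P_0 = P_{h,d} ∩ {x_1 = 0} and a_1 a lattice point of P_1 = P_{h,d} ∩ {x_1 = 1}, or equals u_j' = e_1 + j(e_2+⋯+e_{d-1}) + (j+2)e_d for some j ∈ {1,…,h}. -/

import Mathlib

open Finset Pointwise

noncomputable section

/-- Cast an integer lattice point to a real point. -/
def castPt {d : ℕ} (a : Fin d → ℤ) : Fin d → ℝ := fun i => (a i : ℝ)

/-- The cone of nonnegative real combinations of a set of vectors. -/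
def coneOf {d : ℕ} (A : Set (Fin d → ℝ)) : Set (Fin d → ℝ) :=
  {x | ∃ (n : ℕ) (c : Fin n → ℝ) (v : Fin n → (Fin d → ℝ)),
    (∀ i, 0 ≤ c i) ∧ (∀ i, v i ∈ A) ∧ x = ∑ i, c i • v i}

/-- `A_P = {(α,1) : α ∈ P ∩ ℤ^d} ⊂ ℤ^(d+1)`. -/
def APts {d : ℕ} (P : Set (Fin d → ℝ)) : Set (Fin (d+1) → ℤ) :=
  {b | b (Fin.last d) = 1 ∧ castPt (fun i : Fin d => b i.castSucc) ∈ P}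

/-- The `k`-th standard unit vector (0-indexed coordinate `k`). -/
def eV (d : ℕ) (k : ℕ) : Fin d → ℤ := fun i => if i.val = k then 1 else 0

/-- `e_2 + ⋯ + e_{d-1}` (coordinates with 0 < index < d-1). -/
def eMid (d : ℕ) : Fin d → ℤ := fun i => if 0 < i.val ∧ i.val < d - 1 then 1 else 0

/-- `e_d`, the last unit vector. -/
def eD (d : ℕ) : Fin d → ℤ := eV d (d - 1)

/-- `e_1`, the first unit vector. -/
def eOne (d : ℕ) : Fin d → ℤ := eV d 0

/-- The vertex set of the polytope `P_{h,d}`. -/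
def PhdVerts (h d : ℕ) : Set (Fin d → ℤ) :=
  ({0, eD d, eMid d, (h : ℤ) • (eMid d + eD d), ((h : ℤ) - 1) • eMid d + (h : ℤ) • eD d,
    (h : ℤ) • eMid d + ((h : ℤ) - 1) • eD d, eOne d + (4 : ℤ) • eD d, eOne d + (5 : ℤ) • eD d,
    eOne d + eMid d, eOne d + eMid d + eD d} : Set (Fin d → ℤ))
  ∪ {x | ∃ i : Fin d, 0 < i.val ∧ i.val < d - 1 ∧ (x = eV d i.val ∨ x = eV d i.val + eD d)}

/-- The polytope `P_{h,d} ⊂ ℝ^d`. -/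
def Phd (h d : ℕ) : Set (Fin d → ℝ) := convexHull ℝ (castPt '' PhdVerts h d)

/-- Append a last coordinate to a lattice point. -/
def app {d : ℕ} (a : Fin d → ℤ) (k : ℤ) : Fin (d+1) → ℤ := Fin.snoc a k

/-- `u_j' = e_1 + j(e_2+⋯+e_{d-1}) + (j+2)e_d`. -/
def ujp (d : ℕ) (j : ℤ) : Fin d → ℤ := eOne d + j • eMid d + (j + 2) • eD d

/-- `u_{1,j} = j(e_2+⋯+e_{d-1}+e_d)`. -/
def u1j (d : ℕ) (j : ℤ) : Fin d → ℤ := j • (eMid d + eD d)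

-- ZP0 / ZP1
def ZP0 (h d : ℕ) : Set (Fin d → ℤ) :=
  ({0, eD d, eMid d, (h : ℤ) • (eMid d + eD d), ((h : ℤ) - 1) • eMid d + (h : ℤ) • eD d,
    (h : ℤ) • eMid d + ((h : ℤ) - 1) • eD d} : Set (Fin d → ℤ))
  ∪ {x | ∃ i : Fin d, 0 < i.val ∧ i.val < d - 1 ∧ (x = eV d i.val ∨ x = eV d i.val + eD d)}

def ZP1 (d : ℕ) : Set (Fin d → ℤ) :=
  ({eOne d + (4 : ℤ) • eD d, eOne d + (5 : ℤ) • eD d,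
    eOne d + eMid d, eOne d + eMid d + eD d} : Set (Fin d → ℤ))

lemma PhdVerts_eq (h d : ℕ) : PhdVerts h d = ZP0 h d ∪ ZP1 d := by
  ext x
  have : ∀ P Q : Prop, True → ((P ∨ Q) ↔ (P ∨ Q)) := fun _ _ _ => Iff.rfl
  simp only [PhdVerts, ZP0, ZP1, Set.mem_union, Set.mem_insert_iff, Set.mem_singleton_iff]
  tauto

lemma ZP0_nonempty (h d : ℕ) : (castPt '' ZP0 h d).Nonempty :=
  ⟨castPt 0, Set.mem_image_of_mem _ (Or.inl (by simp))⟩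

lemma ZP1_nonempty (d : ℕ) : (castPt '' ZP1 d).Nonempty :=
  ⟨castPt (eOne d + eMid d), Set.mem_image_of_mem _ (by simp [ZP1])⟩

-- linear inequality engine
lemma hull_le {d : ℕ} {S : Set (Fin d → ℝ)} (i j k l : Fin d) (A B C D E : ℝ)
    (hS : ∀ v ∈ S, A * v i + B * v j + C * v k + D * v l ≤ E)
    {x : Fin d → ℝ} (hx : x ∈ convexHull ℝ S) :
    A * x i + B * x j + C * x k + D * x l ≤ E := by
  have hlin : IsLinearMap ℝ (fun y : Fin d → ℝ => A * y i + B * y j + C * y k + D * y l) := by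
    constructor
    · intro a b; simp only [Pi.add_apply]; ring
    · intro c a; simp only [Pi.smul_apply, smul_eq_mul]; ring
  exact convexHull_min hS (convex_halfSpace_le hlin E) hx

-- coordinate helpers
section coords
variable {d : ℕ} {i : Fin d}

lemma eMid_mid (h1 : 0 < i.val) (h2 : i.val < d - 1) : eMid d i = 1 := if_pos ⟨h1, h2⟩
lemma eMid_notmid (h1 : ¬(0 < i.val ∧ i.val < d - 1)) : eMid d i = 0 := if_neg h1
lemma eV_eq {k : ℕ} (h1 : i.val = k) : eV d k i = 1 := if_pos h1
lemma eV_ne {k : ℕ} (h1 : i.val ≠ k) : eV d k i = 0 := if_neg h1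

end coords

lemma ZP0_cases {h d : ℕ} {u : Fin d → ℤ} (hu : u ∈ ZP0 h d) :
    u = 0 ∨ u = eD d ∨ u = eMid d ∨ u = (h:ℤ) • (eMid d + eD d) ∨
    u = ((h:ℤ)-1) • eMid d + (h:ℤ) • eD d ∨ u = (h:ℤ) • eMid d + ((h:ℤ)-1) • eD d ∨
    ∃ k : Fin d, 0 < k.val ∧ k.val < d - 1 ∧ (u = eV d k.val ∨ u = eV d k.val + eD d) := by
  simpa only [ZP0, Set.mem_union, Set.mem_insert_iff, Set.mem_singleton_iff,
    Set.mem_setOf_eq, or_assoc] using hu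

lemma ZP1_cases {d : ℕ} {u : Fin d → ℤ} (hu : u ∈ ZP1 d) :
    u = eOne d + (4:ℤ) • eD d ∨ u = eOne d + (5:ℤ) • eD d ∨
    u = eOne d + eMid d ∨ u = eOne d + eMid d + eD d := by
  simpa only [ZP1, Set.mem_insert_iff, Set.mem_singleton_iff] using hu

section facts
set_option linter.unusedSectionVars false
set_option maxHeartbeats 1000000
variable {h d : ℕ} (hh : 3 ≤ h) (hd : 3 ≤ d) {p q : Fin d → ℝ}
  (hp : p ∈ convexHull ℝ (castPt '' ZP0 h d))
  (hq : q ∈ convexHull ℝ (castPt '' ZP1 d))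
include hh hd hp

lemma pNN (i : Fin d) (hi1 : 0 < i.val) (hi2 : i.val < d - 1) : 0 ≤ p i := by
  have hhr : (3:ℝ) ≤ (h:ℝ) := by exact_mod_cast hh
  have := hull_le i i i i (-1) 0 0 0 0 ?_ hp
  · linarith
  · (intro v hv;
      obtain ⟨u, hu, rfl⟩ := hv;
      rcases ZP0_cases hu with rfl|rfl|rfl|rfl|rfl|rfl|⟨kk,hk1,hk2,(rfl|rfl)⟩ <;>
        simp only [castPt, eMid, eD, eOne, eV, Pi.add_apply, Pi.smul_apply, Pi.zero_apply,
          smul_eq_mul] <;>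
        (try split_ifs) <;>
        (first
          | (exfalso; omega)
          | (push_cast; nlinarith [hhr])))

lemma pLH (i : Fin d) (hi1 : 0 < i.val) (hi2 : i.val < d - 1) : p i ≤ (h:ℝ) := by
  have hhr : (3:ℝ) ≤ (h:ℝ) := by exact_mod_cast hh
  have := hull_le i i i i 1 0 0 0 (h:ℝ) ?_ hp
  · linarith
  · (intro v hv;
      obtain ⟨u, hu, rfl⟩ := hv;
      rcases ZP0_cases hu with rfl|rfl|rfl|rfl|rfl|rfl|⟨kk,hk1,hk2,(rfl|rfl)⟩ <;>
        simp only [castPt, eMid, eD, eOne, eV, Pi.add_apply, Pi.smul_apply, Pi.zero_apply,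
          smul_eq_mul] <;>
        (try split_ifs) <;>
        (first
          | (exfalso; omega)
          | (push_cast; nlinarith [hhr])))

lemma pSN (l : Fin d) (hl : l.val = d - 1) : 0 ≤ p l := by
  have hhr : (3:ℝ) ≤ (h:ℝ) := by exact_mod_cast hh
  have := hull_le l l l l (-1) 0 0 0 0 ?_ hp
  · linarith
  · (intro v hv;
      obtain ⟨u, hu, rfl⟩ := hv;
      rcases ZP0_cases hu with rfl|rfl|rfl|rfl|rfl|rfl|⟨kk,hk1,hk2,(rfl|rfl)⟩ <;>
        simp only [castPt, eMid, eD, eOne, eV, Pi.add_apply, Pi.smul_apply, Pi.zero_apply,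
          smul_eq_mul] <;>
        (try split_ifs) <;>
        (first
          | (exfalso; omega)
          | (push_cast; nlinarith [hhr])))

lemma pSH (l : Fin d) (hl : l.val = d - 1) : p l ≤ (h:ℝ) := by
  have hhr : (3:ℝ) ≤ (h:ℝ) := by exact_mod_cast hh
  have := hull_le l l l l 1 0 0 0 (h:ℝ) ?_ hp
  · linarith
  · (intro v hv;
      obtain ⟨u, hu, rfl⟩ := hv;
      rcases ZP0_cases hu with rfl|rfl|rfl|rfl|rfl|rfl|⟨kk,hk1,hk2,(rfl|rfl)⟩ <;>
        simp only [castPt, eMid, eD, eOne, eV, Pi.add_apply, Pi.smul_apply, Pi.zero_apply,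
          smul_eq_mul] <;>
        (try split_ifs) <;>
        (first
          | (exfalso; omega)
          | (push_cast; nlinarith [hhr])))

lemma pA5 (i l : Fin d) (hi1 : 0 < i.val) (hi2 : i.val < d - 1) (hl : l.val = d - 1) :
    p l ≤ p i + 1 := by
  have hhr : (3:ℝ) ≤ (h:ℝ) := by exact_mod_cast hh
  have := hull_le i l i i (-1) 1 0 0 1 ?_ hp
  · linarith
  · (intro v hv;
      obtain ⟨u, hu, rfl⟩ := hv;
      rcases ZP0_cases hu with rfl|rfl|rfl|rfl|rfl|rfl|⟨kk,hk1,hk2,(rfl|rfl)⟩ <;>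
        simp only [castPt, eMid, eD, eOne, eV, Pi.add_apply, Pi.smul_apply, Pi.zero_apply,
          smul_eq_mul] <;>
        (try split_ifs) <;>
        (first
          | (exfalso; omega)
          | (push_cast; nlinarith [hhr])))

lemma pA6 (i l : Fin d) (hi1 : 0 < i.val) (hi2 : i.val < d - 1) (hl : l.val = d - 1) :
    p i ≤ p l + 1 := by
  have hhr : (3:ℝ) ≤ (h:ℝ) := by exact_mod_cast hh
  have := hull_le i l i i 1 (-1) 0 0 1 ?_ hp
  · linarith
  · (intro v hv;
      obtain ⟨u, hu, rfl⟩ := hv;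
      rcases ZP0_cases hu with rfl|rfl|rfl|rfl|rfl|rfl|⟨kk,hk1,hk2,(rfl|rfl)⟩ <;>
        simp only [castPt, eMid, eD, eOne, eV, Pi.add_apply, Pi.smul_apply, Pi.zero_apply,
          smul_eq_mul] <;>
        (try split_ifs) <;>
        (first
          | (exfalso; omega)
          | (push_cast; nlinarith [hhr])))

lemma pA7 (i j : Fin d) (hi1 : 0 < i.val) (hi2 : i.val < d - 1)
    (hj1 : 0 < j.val) (hj2 : j.val < d - 1) (hij : i.val ≠ j.val) : p i ≤ p j + 1 := by
  have hhr : (3:ℝ) ≤ (h:ℝ) := by exact_mod_cast hh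
  have := hull_le i j i i 1 (-1) 0 0 1 ?_ hp
  · linarith
  · (intro v hv;
      obtain ⟨u, hu, rfl⟩ := hv;
      rcases ZP0_cases hu with rfl|rfl|rfl|rfl|rfl|rfl|⟨kk,hk1,hk2,(rfl|rfl)⟩ <;>
        simp only [castPt, eMid, eD, eOne, eV, Pi.add_apply, Pi.smul_apply, Pi.zero_apply,
          smul_eq_mul] <;>
        (try split_ifs) <;>
        (first
          | (exfalso; omega)
          | (push_cast; nlinarith [hhr])))

lemma pA8 (i j : Fin d) (hi1 : 0 < i.val) (hi2 : i.val < d - 1)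
    (hj1 : 0 < j.val) (hj2 : j.val < d - 1) (hij : i.val ≠ j.val) :
    (h:ℝ) * p j ≤ ((h:ℝ)-1) * p i + h := by
  have hhr : (3:ℝ) ≤ (h:ℝ) := by exact_mod_cast hh
  have := hull_le i j i i (-((h:ℝ)-1)) (h:ℝ) 0 0 (h:ℝ) ?_ hp
  · linarith
  · (intro v hv;
      obtain ⟨u, hu, rfl⟩ := hv;
      rcases ZP0_cases hu with rfl|rfl|rfl|rfl|rfl|rfl|⟨kk,hk1,hk2,(rfl|rfl)⟩ <;>
        simp only [castPt, eMid, eD, eOne, eV, Pi.add_apply, Pi.smul_apply, Pi.zero_apply,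
          smul_eq_mul] <;>
        (try split_ifs) <;>
        (first
          | (exfalso; omega)
          | (push_cast; nlinarith [hhr])))

lemma pA9 (i j k : Fin d) (hi1 : 0 < i.val) (hi2 : i.val < d - 1)
    (hj1 : 0 < j.val) (hj2 : j.val < d - 1) (hk1 : 0 < k.val) (hk2 : k.val < d - 1)
    (hij : i.val ≠ j.val) (hik : i.val ≠ k.val) (hjk : j.val ≠ k.val) :
    (h:ℝ) * (p i + p j) ≤ (h:ℝ) + (2*(h:ℝ)-1) * p k := by
  have hhr : (3:ℝ) ≤ (h:ℝ) := by exact_mod_cast hh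
  have := hull_le i j k k (h:ℝ) (h:ℝ) (-(2*(h:ℝ)-1)) 0 (h:ℝ) ?_ hp
  · linarith
  · (intro v hv;
      obtain ⟨u, hu, rfl⟩ := hv;
      rcases ZP0_cases hu with rfl|rfl|rfl|rfl|rfl|rfl|⟨kk,hk1,hk2,(rfl|rfl)⟩ <;>
        simp only [castPt, eMid, eD, eOne, eV, Pi.add_apply, Pi.smul_apply, Pi.zero_apply,
          smul_eq_mul] <;>
        (try split_ifs) <;>
        (first
          | (exfalso; omega)
          | (push_cast; nlinarith [hhr])))

lemma pZ0 (z : Fin d) (hz : z.val = 0) : p z = 0 := by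
  have hhr : (3:ℝ) ≤ (h:ℝ) := by exact_mod_cast hh
  have h1 := hull_le z z z z 1 0 0 0 0 ?_ hp
  have h2 := hull_le z z z z (-1) 0 0 0 0 ?_ hp
  · linarith
  · (intro v hv;
      obtain ⟨u, hu, rfl⟩ := hv;
      rcases ZP0_cases hu with rfl|rfl|rfl|rfl|rfl|rfl|⟨kk,hk1,hk2,(rfl|rfl)⟩ <;>
        simp only [castPt, eMid, eD, eOne, eV, Pi.add_apply, Pi.smul_apply, Pi.zero_apply,
          smul_eq_mul] <;>
        (try split_ifs) <;>
        (first
          | (exfalso; omega)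
          | (push_cast; nlinarith [hhr])))
  · (intro v hv;
      obtain ⟨u, hu, rfl⟩ := hv;
      rcases ZP0_cases hu with rfl|rfl|rfl|rfl|rfl|rfl|⟨kk,hk1,hk2,(rfl|rfl)⟩ <;>
        simp only [castPt, eMid, eD, eOne, eV, Pi.add_apply, Pi.smul_apply, Pi.zero_apply,
          smul_eq_mul] <;>
        (try split_ifs) <;>
        (first
          | (exfalso; omega)
          | (push_cast; nlinarith [hhr])))

omit hp
include hq

lemma qEq (i j : Fin d) (hi1 : 0 < i.val) (hi2 : i.val < d - 1)
    (hj1 : 0 < j.val) (hj2 : j.val < d - 1) : q i = q j := by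
  have hhr : (3:ℝ) ≤ (h:ℝ) := by exact_mod_cast hh
  have h1 := hull_le i j i i 1 (-1) 0 0 0 ?_ hq
  have h2 := hull_le i j i i (-1) 1 0 0 0 ?_ hq
  · linarith
  · (intro v hv;
      obtain ⟨u, hu, rfl⟩ := hv;
      rcases ZP1_cases hu with rfl|rfl|rfl|rfl <;>
        simp only [castPt, eMid, eD, eOne, eV, Pi.add_apply, Pi.smul_apply, Pi.zero_apply,
          smul_eq_mul] <;>
        (try split_ifs) <;>
        (first
          | (exfalso; omega)
          | (push_cast; nlinarith [hhr])))
  · (intro v hv;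
      obtain ⟨u, hu, rfl⟩ := hv;
      rcases ZP1_cases hu with rfl|rfl|rfl|rfl <;>
        simp only [castPt, eMid, eD, eOne, eV, Pi.add_apply, Pi.smul_apply, Pi.zero_apply,
          smul_eq_mul] <;>
        (try split_ifs) <;>
        (first
          | (exfalso; omega)
          | (push_cast; nlinarith [hhr])))

lemma qT0 (i : Fin d) (hi1 : 0 < i.val) (hi2 : i.val < d - 1) : 0 ≤ q i := by
  have hhr : (3:ℝ) ≤ (h:ℝ) := by exact_mod_cast hh
  have := hull_le i i i i (-1) 0 0 0 0 ?_ hq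
  · linarith
  · (intro v hv;
      obtain ⟨u, hu, rfl⟩ := hv;
      rcases ZP1_cases hu with rfl|rfl|rfl|rfl <;>
        simp only [castPt, eMid, eD, eOne, eV, Pi.add_apply, Pi.smul_apply, Pi.zero_apply,
          smul_eq_mul] <;>
        (try split_ifs) <;>
        (first
          | (exfalso; omega)
          | (push_cast; nlinarith [hhr])))

lemma qT1 (i : Fin d) (hi1 : 0 < i.val) (hi2 : i.val < d - 1) : q i ≤ 1 := by
  have hhr : (3:ℝ) ≤ (h:ℝ) := by exact_mod_cast hh
  have := hull_le i i i i 1 0 0 0 1 ?_ hq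
  · linarith
  · (intro v hv;
      obtain ⟨u, hu, rfl⟩ := hv;
      rcases ZP1_cases hu with rfl|rfl|rfl|rfl <;>
        simp only [castPt, eMid, eD, eOne, eV, Pi.add_apply, Pi.smul_apply, Pi.zero_apply,
          smul_eq_mul] <;>
        (try split_ifs) <;>
        (first
          | (exfalso; omega)
          | (push_cast; nlinarith [hhr])))

lemma qMu1 (i l : Fin d) (hi1 : 0 < i.val) (hi2 : i.val < d - 1) (hl : l.val = d - 1) :
    4 ≤ 4 * q i + q l := by
  have hhr : (3:ℝ) ≤ (h:ℝ) := by exact_mod_cast hh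
  have := hull_le i l i i (-4) (-1) 0 0 (-4) ?_ hq
  · linarith
  · (intro v hv;
      obtain ⟨u, hu, rfl⟩ := hv;
      rcases ZP1_cases hu with rfl|rfl|rfl|rfl <;>
        simp only [castPt, eMid, eD, eOne, eV, Pi.add_apply, Pi.smul_apply, Pi.zero_apply,
          smul_eq_mul] <;>
        (try split_ifs) <;>
        (first
          | (exfalso; omega)
          | (push_cast; nlinarith [hhr])))

lemma qMu2 (i l : Fin d) (hi1 : 0 < i.val) (hi2 : i.val < d - 1) (hl : l.val = d - 1) :
    4 * q i + q l ≤ 5 := by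
  have hhr : (3:ℝ) ≤ (h:ℝ) := by exact_mod_cast hh
  have := hull_le i l i i 4 1 0 0 5 ?_ hq
  · linarith
  · (intro v hv;
      obtain ⟨u, hu, rfl⟩ := hv;
      rcases ZP1_cases hu with rfl|rfl|rfl|rfl <;>
        simp only [castPt, eMid, eD, eOne, eV, Pi.add_apply, Pi.smul_apply, Pi.zero_apply,
          smul_eq_mul] <;>
        (try split_ifs) <;>
        (first
          | (exfalso; omega)
          | (push_cast; nlinarith [hhr])))

lemma qZ1 (z : Fin d) (hz : z.val = 0) : q z = 1 := by
  have hhr : (3:ℝ) ≤ (h:ℝ) := by exact_mod_cast hh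
  have h1 := hull_le z z z z 1 0 0 0 1 ?_ hq
  have h2 := hull_le z z z z (-1) 0 0 0 (-1) ?_ hq
  · linarith
  · (intro v hv;
      obtain ⟨u, hu, rfl⟩ := hv;
      rcases ZP1_cases hu with rfl|rfl|rfl|rfl <;>
        simp only [castPt, eMid, eD, eOne, eV, Pi.add_apply, Pi.smul_apply, Pi.zero_apply,
          smul_eq_mul] <;>
        (try split_ifs) <;>
        (first
          | (exfalso; omega)
          | (push_cast; nlinarith [hhr])))
  · (intro v hv;
      obtain ⟨u, hu, rfl⟩ := hv;
      rcases ZP1_cases hu with rfl|rfl|rfl|rfl <;>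
        simp only [castPt, eMid, eD, eOne, eV, Pi.add_apply, Pi.smul_apply, Pi.zero_apply,
          smul_eq_mul] <;>
        (try split_ifs) <;>
        (first
          | (exfalso; omega)
          | (push_cast; nlinarith [hhr])))

end facts

lemma combo_mem {d : ℕ} {S : Set (Fin d → ℝ)} {v1 v2 x : Fin d → ℝ}
    (h1 : v1 ∈ S) (h2 : v2 ∈ S) {θ : ℝ} (h0 : 0 ≤ θ) (h1' : θ ≤ 1)
    (hx : x = θ • v1 + (1-θ) • v2) : x ∈ convexHull ℝ S := by
  subst hx
  exact (convex_convexHull ℝ S) (subset_convexHull ℝ S h1) (subset_convexHull ℝ S h2)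
    h0 (by linarith) (by ring)

lemma vert_mem {h d : ℕ} {u : Fin d → ℤ} (hu : u ∈ PhdVerts h d) :
    castPt u ∈ Phd h d := subset_convexHull ℝ _ (Set.mem_image_of_mem _ hu)

section memb
set_option linter.unusedSectionVars false
variable {h d : ℕ} (hh : 3 ≤ h) (hd : 3 ≤ d)
include hh hd

-- M1 : (j eMid, j eD)
lemma M1 {j : ℤ} (hj0 : 0 ≤ j) (hjh : j ≤ (h:ℤ)) :
    castPt (j • eMid d + j • eD d) ∈ Phd h d := by
  have hhr : (0:ℝ) < (h:ℝ) := by positivity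
  have hjr0 : (0:ℝ) ≤ (j:ℝ) := by exact_mod_cast hj0
  have hjrh : (j:ℝ) ≤ (h:ℝ) := by exact_mod_cast hjh
  apply combo_mem (v1 := castPt ((h:ℤ) • (eMid d + eD d))) (v2 := castPt 0)
    (θ := (j:ℝ)/(h:ℝ))
  · exact Set.mem_image_of_mem _ (by simp [PhdVerts])
  · exact Set.mem_image_of_mem _ (by simp [PhdVerts])
  · positivity
  · rw [div_le_one hhr]; exact hjrh
  · funext i
    simp only [castPt, eMid, eD, eOne, eV, Pi.add_apply, Pi.smul_apply, Pi.zero_apply,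
      smul_eq_mul]
    (try split_ifs) <;> (first | (exfalso; omega) | (push_cast; field_simp; try ring))

-- M2 : (j eMid, (j+1) eD), j ≤ h-1
lemma M2 {j : ℤ} (hj0 : 0 ≤ j) (hjh : j ≤ (h:ℤ) - 1) :
    castPt (j • eMid d + (j+1) • eD d) ∈ Phd h d := by
  have hhr : (0:ℝ) < (h:ℝ) - 1 := by
    have : (3:ℝ) ≤ (h:ℝ) := by exact_mod_cast hh
    linarith
  have hjr0 : (0:ℝ) ≤ (j:ℝ) := by exact_mod_cast hj0
  have hjrh : (j:ℝ) ≤ (h:ℝ) - 1 := by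
    have : (j:ℝ) ≤ ((h:ℤ):ℝ) - 1 := by exact_mod_cast hjh
    simpa using this
  apply combo_mem (v1 := castPt (((h:ℤ)-1) • eMid d + (h:ℤ) • eD d)) (v2 := castPt (eD d))
    (θ := (j:ℝ)/((h:ℝ)-1))
  · exact Set.mem_image_of_mem _ (by simp [PhdVerts])
  · exact Set.mem_image_of_mem _ (by simp [PhdVerts])
  · positivity
  · rw [div_le_one hhr]; exact hjrh
  · funext i
    simp only [castPt, eMid, eD, eOne, eV, Pi.add_apply, Pi.smul_apply, Pi.zero_apply,
      smul_eq_mul]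
    (try split_ifs) <;> (first | (exfalso; omega) | (push_cast; field_simp; try ring))

-- M3 : (j eMid, (j-1) eD), 1 ≤ j ≤ h
lemma M3 {j : ℤ} (hj0 : 1 ≤ j) (hjh : j ≤ (h:ℤ)) :
    castPt (j • eMid d + (j-1) • eD d) ∈ Phd h d := by
  have hhr : (0:ℝ) < (h:ℝ) - 1 := by
    have : (3:ℝ) ≤ (h:ℝ) := by exact_mod_cast hh
    linarith
  have hjr0 : (1:ℝ) ≤ (j:ℝ) := by exact_mod_cast hj0
  have hjrh : (j:ℝ) ≤ (h:ℝ) := by exact_mod_cast hjh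
  apply combo_mem (v1 := castPt ((h:ℤ) • eMid d + ((h:ℤ)-1) • eD d)) (v2 := castPt (eMid d))
    (θ := ((j:ℝ)-1)/((h:ℝ)-1))
  · exact Set.mem_image_of_mem _ (by simp [PhdVerts])
  · exact Set.mem_image_of_mem _ (by simp [PhdVerts])
  · apply div_nonneg (by linarith) (le_of_lt hhr)
  · rw [div_le_one hhr]; linarith
  · funext i
    simp only [castPt, eMid, eD, eOne, eV, Pi.add_apply, Pi.smul_apply, Pi.zero_apply,
      smul_eq_mul]
    (try split_ifs) <;> (first | (exfalso; omega) | (push_cast; field_simp; try ring))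

end memb

section main
set_option linter.unusedSectionVars false
set_option maxHeartbeats 1000000

variable {h d : ℕ}

lemma tri (hd : 3 ≤ d) (i : Fin d) :
    i.val = 0 ∨ (0 < i.val ∧ i.val < d - 1) ∨ i.val = d - 1 := by omega

lemma pos_of_three_le_aux (hd : 3 ≤ d) : 0 < d := by omega

lemma slice_mid (hd : 3 ≤ d) (A B : ℤ) :
    castPt (A • eMid d + B • eD d) (⟨0, pos_of_three_le_aux hd⟩ : Fin d) = 0 := by
  simp only [castPt, Pi.add_apply, Pi.smul_apply, smul_eq_mul, eMid, eD, eV]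
  split_ifs <;> first | (exfalso; omega) | norm_num

lemma slice_eV (hd : 3 ≤ d) (k : ℕ) (hk : 0 < k) :
    castPt (eV d k) (⟨0, pos_of_three_le_aux hd⟩ : Fin d) = 0 := by
  simp only [castPt, eV]
  split_ifs <;> first | (exfalso; omega) | norm_num

lemma slice_eVD (hd : 3 ≤ d) (k : ℕ) (hk : 0 < k) :
    castPt (eV d k + eD d) (⟨0, pos_of_three_le_aux hd⟩ : Fin d) = 0 := by
  simp only [castPt, Pi.add_apply, eV, eD]
  split_ifs <;> first | (exfalso; omega) | norm_num

lemma slice_one (hd : 3 ≤ d) (B : ℤ) :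
    castPt (eOne d + B • eD d) (⟨0, pos_of_three_le_aux hd⟩ : Fin d) = 1 := by
  simp only [castPt, Pi.add_apply, Pi.smul_apply, smul_eq_mul, eOne, eD, eV]
  split_ifs <;> first | (exfalso; omega) | norm_num

lemma slice_oneM (hd : 3 ≤ d) :
    castPt (eOne d + eMid d) (⟨0, pos_of_three_le_aux hd⟩ : Fin d) = 1 := by
  simp only [castPt, Pi.add_apply, eOne, eMid, eD, eV]
  split_ifs <;> first | (exfalso; omega) | norm_num

lemma slice_oneMD (hd : 3 ≤ d) :
    castPt (eOne d + eMid d + eD d) (⟨0, pos_of_three_le_aux hd⟩ : Fin d) = 1 := by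
  simp only [castPt, Pi.add_apply, eOne, eMid, eD, eV]
  split_ifs <;> first | (exfalso; omega) | norm_num

lemma u7_mem : eOne d + (4:ℤ) • eD d ∈ PhdVerts h d := by simp [PhdVerts]
lemma u8_mem : eOne d + (5:ℤ) • eD d ∈ PhdVerts h d := by simp [PhdVerts]
lemma u9_mem : eOne d + eMid d ∈ PhdVerts h d := by simp [PhdVerts]
lemma u10_mem : eOne d + eMid d + eD d ∈ PhdVerts h d := by simp [PhdVerts]
lemma ev_mem {k : Fin d} (hk1 : 0 < k.val) (hk2 : k.val < d - 1) :
    eV d k.val ∈ PhdVerts h d := Or.inr ⟨k, hk1, hk2, Or.inl rfl⟩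
lemma evD_mem {k : Fin d} (hk1 : 0 < k.val) (hk2 : k.val < d - 1) :
    eV d k.val + eD d ∈ PhdVerts h d := Or.inr ⟨k, hk1, hk2, Or.inr rfl⟩

lemma case_neq (hh : 3 ≤ h) (hd : 3 ≤ d) (a : Fin d → ℤ) (p q : Fin d → ℝ)
    (hp : p ∈ convexHull ℝ (castPt '' ZP0 h d)) (hq : q ∈ convexHull ℝ (castPt '' ZP1 d))
    (hpq : ∀ i, (a i : ℝ) = p i + q i)
    (ilo ihi : Fin d) (hlo1 : 0 < ilo.val) (hlo2 : ilo.val < d - 1)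
    (hhi1 : 0 < ihi.val) (hhi2 : ihi.val < d - 1)
    (hne : ilo.val ≠ ihi.val) (hstep : a ihi = a ilo + 1) :
    ∃ a₀ a₁ : Fin d → ℤ,
      castPt a₀ ∈ Phd h d ∩ {x : Fin d → ℝ | x ⟨0, pos_of_three_le_aux hd⟩ = 0} ∧
      castPt a₁ ∈ Phd h d ∩ {x : Fin d → ℝ | x ⟨0, pos_of_three_le_aux hd⟩ = 1} ∧
      a = a₀ + a₁ := by
  have hhr : (3:ℝ) ≤ (h:ℝ) := by exact_mod_cast hh
  set i0 : Fin d := ⟨0, by omega⟩ with hi0def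
  set iL : Fin d := ⟨d-1, by omega⟩ with hiLdef
  have hv0 : i0.val = 0 := rfl
  have hvL : iL.val = d - 1 := rfl
  have ha0 : a i0 = 1 := by
    have := hpq i0
    rw [pZ0 hh hd hp i0 hv0, qZ1 hh hd hq i0 hv0] at this
    exact_mod_cast this
  -- t related
  have tq : ∀ m : Fin d, 0 < m.val → m.val < d - 1 → q m = q ilo :=
    fun m hm1 hm2 => qEq hh hd hq m ilo hm1 hm2 hlo1 hlo2
  have t0 : 0 ≤ q ilo := qT0 hh hd hq ilo hlo1 hlo2
  have t1 : q ilo ≤ 1 := qT1 hh hd hq ilo hlo1 hlo2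
  have plo0 : 0 ≤ p ilo := pNN hh hd hp ilo hlo1 hlo2
  have e1 : p ilo = (a ilo : ℝ) - q ilo := by have := hpq ilo; linarith
  have e2 : p ihi = (a ilo : ℝ) + 1 - q ilo := by
    have := hpq ihi
    have h2 : ((a ihi : ℤ) : ℝ) = ((a ilo : ℤ) : ℝ) + 1 := by exact_mod_cast hstep
    rw [tq ihi hhi1 hhi2] at this
    linarith
  have kk := pA8 hh hd hp ilo ihi hlo1 hlo2 hhi1 hhi2 hne
  rw [e1, e2] at kk
  have halo_le_t : (a ilo : ℝ) ≤ q ilo := by nlinarith [kk]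
  have halo01 : a ilo = 0 ∨ a ilo = 1 := by
    have h1 : (0:ℝ) ≤ (a ilo : ℝ) := by linarith [e1, plo0, t0]
    have h2 : (a ilo : ℝ) ≤ 1 := by linarith
    have h1' : (0:ℤ) ≤ a ilo := by exact_mod_cast h1
    have h2' : a ilo ≤ 1 := by exact_mod_cast h2
    omega
  -- common: bound for all middle coordinates
  have pm1 : ∀ m : Fin d, 0 < m.val → m.val < d - 1 → m.val ≠ ilo.val → p m ≤ 1 := by
    intro m hm1 hm2 hmne
    have := pA8 hh hd hp ilo m hlo1 hlo2 hm1 hm2 (fun hc => hmne hc.symm)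
    nlinarith [this, plo0, e1, halo_le_t, t0]
  have s0 : 0 ≤ p iL := pSN hh hd hp iL hvL
  have s1 : p iL ≤ p ilo + 1 := pA5 hh hd hp ilo iL hlo1 hlo2 hvL
  have hzr : (a iL : ℝ) = p iL + q iL := hpq iL
  rcases halo01 with hlo0 | hlo1'
  · -- a ilo = 0, t = 0
    have hlo0r : (a ilo : ℝ) = 0 := by exact_mod_cast hlo0
    have ht0 : q ilo = 0 := by rw [hlo0r] at e1; linarith
    have hplo : p ilo = 0 := by rw [e1, hlo0r, ht0]; ring
    have ham : ∀ m : Fin d, 0 < m.val → m.val < d - 1 → m.val ≠ ihi.val → a m = 0 := by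
      intro m hm1 hm2 hmne
      have hq' : q m = 0 := by rw [tq m hm1 hm2, ht0]
      have hpm : (a m : ℝ) = p m := by have := hpq m; rw [hq'] at this; linarith
      have hub : (a m : ℝ) ≤ 1 := by
        by_cases hml : m.val = ilo.val
        · have : m = ilo := Fin.ext hml
          rw [this, hlo0r]; norm_num
        · have := pm1 m hm1 hm2 hml; linarith
      have hlb : (0:ℝ) ≤ (a m : ℝ) := by
        rw [hpm]; exact pNN hh hd hp m hm1 hm2
      have h01 : a m = 0 ∨ a m = 1 := by
        have := (by exact_mod_cast hub : a m ≤ 1)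
        have := (by exact_mod_cast hlb : (0:ℤ) ≤ a m)
        omega
      rcases h01 with h0 | h1
      · exact h0
      · exfalso
        have hmlo : m.val ≠ ilo.val := by
          intro hc; rw [show m = ilo from Fin.ext hc] at h1; omega
        have h9 := pA9 hh hd hp ihi m ilo hhi1 hhi2 hm1 hm2 hlo1 hlo2
          (fun hc => hmne hc.symm) (fun hc => hne hc.symm) hmlo
        have hpm1 : p m = 1 := by rw [← hpm]; exact_mod_cast h1
        have hpihi : p ihi = 1 := by rw [e2, hlo0r, ht0]; ring
        rw [hpm1, hpihi, hplo] at h9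
        nlinarith [h9]
    have hahi : a ihi = 1 := by omega
    -- z = a iL ∈ {4,5,6}
    have hmu1 : 4 ≤ 4 * q ilo + q iL := qMu1 hh hd hq ilo iL hlo1 hlo2 hvL
    have hmu2 : 4 * q ilo + q iL ≤ 5 := qMu2 hh hd hq ilo iL hlo1 hlo2 hvL
    have hz46 : 4 ≤ a iL ∧ a iL ≤ 6 := by
      constructor
      · have : (4:ℝ) ≤ (a iL : ℝ) := by rw [hzr]; rw [ht0] at hmu1; linarith
        exact_mod_cast this
      · have : (a iL : ℝ) ≤ 6 := by rw [hzr]; rw [ht0] at hmu2; rw [hplo] at s1; linarith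
        exact_mod_cast this
    -- decompositions
    have hfin : ∀ B : ℤ, (B = 0 ∨ B = 1) → a iL = B + 4 ∨ a iL = B + 5 →
        ∃ a₀ a₁ : Fin d → ℤ,
          castPt a₀ ∈ Phd h d ∩ {x : Fin d → ℝ | x ⟨0, by omega⟩ = 0} ∧
          castPt a₁ ∈ Phd h d ∩ {x : Fin d → ℝ | x ⟨0, by omega⟩ = 1} ∧
          a = a₀ + a₁ := by
      intro B hB hzB
      refine ⟨(if B = 1 then eV d ihi.val + eD d else eV d ihi.val),
        (if a iL = B + 4 then eOne d + (4:ℤ) • eD d else eOne d + (5:ℤ) • eD d), ?_, ?_, ?_⟩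
      · constructor
        · split_ifs
          · exact vert_mem (evD_mem hhi1 hhi2)
          · exact vert_mem (ev_mem hhi1 hhi2)
        · split_ifs
          · exact slice_eVD hd ihi.val hhi1
          · exact slice_eV hd ihi.val hhi1
      · constructor
        · split_ifs
          · exact vert_mem u7_mem
          · exact vert_mem u8_mem
        · split_ifs
          · exact slice_one hd 4
          · exact slice_one hd 5
      · funext i
        rcases tri hd i with h0i | hmid | hLi
        · have hii : i = i0 := Fin.ext (by omega)
          subst hii
          split_ifs <;>
            simp only [Pi.add_apply, Pi.smul_apply, smul_eq_mul, eV, eD, eOne, eMid] <;>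
            split_ifs <;> omega
        · by_cases hmi : i.val = ihi.val
          · have : i = ihi := Fin.ext hmi
            subst this
            split_ifs <;>
              simp only [Pi.add_apply, Pi.smul_apply, smul_eq_mul, eV, eD, eOne, eMid] <;>
              split_ifs <;> omega
          · have := ham i hmid.1 hmid.2 hmi
            split_ifs <;>
              simp only [Pi.add_apply, Pi.smul_apply, smul_eq_mul, eV, eD, eOne, eMid] <;>
              split_ifs <;> omega
        · have hii : i = iL := Fin.ext (by omega)
          subst hii
          split_ifs <;>
            simp only [Pi.add_apply, Pi.smul_apply, smul_eq_mul, eV, eD, eOne, eMid] <;>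
            split_ifs <;> omega
    rcases (by omega : a iL = 4 ∨ a iL = 5 ∨ a iL = 6) with hz | hz | hz
    · exact hfin 0 (Or.inl rfl) (Or.inl (by omega))
    · exact hfin 1 (Or.inr rfl) (Or.inl (by omega))
    · exact hfin 1 (Or.inr rfl) (Or.inr (by omega))
  · -- a ilo = 1, t = 1
    have hlo1r : (a ilo : ℝ) = 1 := by exact_mod_cast hlo1'
    have ht1 : q ilo = 1 := by rw [hlo1r] at halo_le_t; linarith
    have hplo : p ilo = 0 := by rw [e1, hlo1r, ht1]; ring
    have ham : ∀ m : Fin d, 0 < m.val → m.val < d - 1 → m.val ≠ ihi.val → a m = 1 := by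
      intro m hm1 hm2 hmne
      have hq' : q m = 1 := by rw [tq m hm1 hm2, ht1]
      have hpm : (a m : ℝ) = p m + 1 := by have := hpq m; rw [hq'] at this; linarith
      have hub : (a m : ℝ) ≤ 2 := by
        by_cases hml : m.val = ilo.val
        · have : m = ilo := Fin.ext hml
          rw [this, hlo1r]; norm_num
        · have := pm1 m hm1 hm2 hml; linarith
      have hlb : (1:ℝ) ≤ (a m : ℝ) := by
        have := pNN hh hd hp m hm1 hm2; linarith
      have h01 : a m = 1 ∨ a m = 2 := by
        have := (by exact_mod_cast hub : a m ≤ 2)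
        have := (by exact_mod_cast hlb : (1:ℤ) ≤ a m)
        omega
      rcases h01 with h0 | h1
      · exact h0
      · exfalso
        have hmlo : m.val ≠ ilo.val := by
          intro hc; rw [show m = ilo from Fin.ext hc] at h1; omega
        have h9 := pA9 hh hd hp ihi m ilo hhi1 hhi2 hm1 hm2 hlo1 hlo2
          (fun hc => hmne hc.symm) (fun hc => hne hc.symm) hmlo
        have hpm1 : p m = 1 := by
          have : (a m : ℝ) = 2 := by exact_mod_cast h1
          linarith [hpm, this]
        have hpihi : p ihi = 1 := by rw [e2, hlo1r, ht1]; ring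
        rw [hpm1, hpihi, hplo] at h9
        nlinarith [h9]
    have hahi : a ihi = 2 := by omega
    have hmu1 : 4 ≤ 4 * q ilo + q iL := qMu1 hh hd hq ilo iL hlo1 hlo2 hvL
    have hmu2 : 4 * q ilo + q iL ≤ 5 := qMu2 hh hd hq ilo iL hlo1 hlo2 hvL
    have hz02 : 0 ≤ a iL ∧ a iL ≤ 2 := by
      constructor
      · have : (0:ℝ) ≤ (a iL : ℝ) := by rw [hzr]; rw [ht1] at hmu1; linarith
        exact_mod_cast this
      · have : (a iL : ℝ) ≤ 2 := by rw [hzr]; rw [ht1] at hmu2; rw [hplo] at s1; linarith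
        exact_mod_cast this
    have hfin : ∀ B : ℤ, (B = 0 ∨ B = 1) → a iL = B ∨ a iL = B + 1 →
        (a iL = 2 → B = 1) →
        ∃ a₀ a₁ : Fin d → ℤ,
          castPt a₀ ∈ Phd h d ∩ {x : Fin d → ℝ | x ⟨0, by omega⟩ = 0} ∧
          castPt a₁ ∈ Phd h d ∩ {x : Fin d → ℝ | x ⟨0, by omega⟩ = 1} ∧
          a = a₀ + a₁ := by
      intro B hB hzB hz2
      refine ⟨(if B = 1 then eV d ihi.val + eD d else eV d ihi.val),
        (if a iL = B then eOne d + eMid d else eOne d + eMid d + eD d), ?_, ?_, ?_⟩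
      · constructor
        · split_ifs
          · exact vert_mem (evD_mem hhi1 hhi2)
          · exact vert_mem (ev_mem hhi1 hhi2)
        · split_ifs
          · exact slice_eVD hd ihi.val hhi1
          · exact slice_eV hd ihi.val hhi1
      · constructor
        · split_ifs
          · exact vert_mem u9_mem
          · exact vert_mem u10_mem
        · split_ifs
          · exact slice_oneM hd
          · exact slice_oneMD hd
      · funext i
        rcases tri hd i with h0i | hmid | hLi
        · have hii : i = i0 := Fin.ext (by omega)
          subst hii
          split_ifs <;>
            simp only [Pi.add_apply, Pi.smul_apply, smul_eq_mul, eV, eD, eOne, eMid] <;>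
            split_ifs <;> omega
        · by_cases hmi : i.val = ihi.val
          · have : i = ihi := Fin.ext hmi
            subst this
            split_ifs <;>
              simp only [Pi.add_apply, Pi.smul_apply, smul_eq_mul, eV, eD, eOne, eMid] <;>
              split_ifs <;> omega
          · have := ham i hmid.1 hmid.2 hmi
            split_ifs <;>
              simp only [Pi.add_apply, Pi.smul_apply, smul_eq_mul, eV, eD, eOne, eMid] <;>
              split_ifs <;> omega
        · have hii : i = iL := Fin.ext (by omega)
          subst hii
          split_ifs <;>
            simp only [Pi.add_apply, Pi.smul_apply, smul_eq_mul, eV, eD, eOne, eMid] <;>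
            split_ifs <;> omega
    rcases (by omega : a iL = 0 ∨ a iL = 1 ∨ a iL = 2) with hz | hz | hz
    · exact hfin 0 (Or.inl rfl) (Or.inl (by omega)) (by omega)
    · exact hfin 1 (Or.inr rfl) (Or.inl (by omega)) (by omega)
    · exact hfin 1 (Or.inr rfl) (Or.inr (by omega)) (by omega)


lemma case_eq (hh : 3 ≤ h) (hd : 3 ≤ d) (a : Fin d → ℤ) (p q : Fin d → ℝ)
    (hp : p ∈ convexHull ℝ (castPt '' ZP0 h d)) (hq : q ∈ convexHull ℝ (castPt '' ZP1 d))
    (hpq : ∀ i, (a i : ℝ) = p i + q i)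
    (hall : ∀ i : Fin d, 0 < i.val → i.val < d - 1 → a i = a ⟨1, by omega⟩) :
    (∃ a₀ a₁ : Fin d → ℤ,
      castPt a₀ ∈ Phd h d ∩ {x : Fin d → ℝ | x ⟨0, pos_of_three_le_aux hd⟩ = 0} ∧
      castPt a₁ ∈ Phd h d ∩ {x : Fin d → ℝ | x ⟨0, pos_of_three_le_aux hd⟩ = 1} ∧
      a = a₀ + a₁) ∨
    (∃ j : ℤ, 1 ≤ j ∧ j ≤ (h : ℤ) ∧ a = ujp d j) := by
  have hhr : (3:ℝ) ≤ (h:ℝ) := by exact_mod_cast hh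
  set i0 : Fin d := ⟨0, by omega⟩ with hi0def
  set i1 : Fin d := ⟨1, by omega⟩ with hi1def
  set iL : Fin d := ⟨d-1, by omega⟩ with hiLdef
  have hv0 : i0.val = 0 := rfl
  have hv1 : i1.val = 1 := rfl
  have hvL : iL.val = d - 1 := rfl
  have hm1a : 0 < i1.val := by omega
  have hm1b : i1.val < d - 1 := by omega
  have ha0 : a i0 = 1 := by
    have := hpq i0
    rw [pZ0 hh hd hp i0 hv0, qZ1 hh hd hq i0 hv0] at this
    exact_mod_cast this
  have t0 : 0 ≤ q i1 := qT0 hh hd hq i1 hm1a hm1b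
  have t1 : q i1 ≤ 1 := qT1 hh hd hq i1 hm1a hm1b
  have hp1nn : 0 ≤ p i1 := pNN hh hd hp i1 hm1a hm1b
  have hp1h : p i1 ≤ (h:ℝ) := pLH hh hd hp i1 hm1a hm1b
  have s0 : 0 ≤ p iL := pSN hh hd hp iL hvL
  have sh : p iL ≤ (h:ℝ) := pSH hh hd hp iL hvL
  have s1 : p iL ≤ p i1 + 1 := pA5 hh hd hp i1 iL hm1a hm1b hvL
  have s2 : p i1 ≤ p iL + 1 := pA6 hh hd hp i1 iL hm1a hm1b hvL
  have hmu1 : 4 ≤ 4 * q i1 + q iL := qMu1 hh hd hq i1 iL hm1a hm1b hvL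
  have hmu2 : 4 * q i1 + q iL ≤ 5 := qMu2 hh hd hq i1 iL hm1a hm1b hvL
  have hcr : (a i1 : ℝ) = p i1 + q i1 := hpq i1
  have hzr : (a iL : ℝ) = p iL + q iL := hpq iL
  have Hc0 : 0 ≤ a i1 := by
    have : (0:ℝ) ≤ (a i1 : ℝ) := by linarith
    exact_mod_cast this
  have Hch : a i1 ≤ (h:ℤ) + 1 := by
    have : (a i1 : ℝ) ≤ (h:ℝ) + 1 := by linarith
    exact_mod_cast this
  have Hz0 : 0 ≤ a iL := by
    have : (0:ℝ) ≤ (a iL : ℝ) := by linarith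
    exact_mod_cast this
  have Hzc2 : a i1 - 2 ≤ a iL := by
    have : (a i1 : ℝ) - 2 ≤ (a iL : ℝ) := by linarith
    exact_mod_cast this
  have Hz4c : 4 - 4 * a i1 ≤ a iL := by
    have : 4 - 4 * (a i1 : ℝ) ≤ (a iL : ℝ) := by linarith
    exact_mod_cast this
  have Hzc6 : a iL ≤ a i1 + 6 := by
    have : (a iL : ℝ) ≤ (a i1 : ℝ) + 6 := by linarith
    exact_mod_cast this
  have Hz5h : a iL ≤ 5 * (h:ℤ) + 5 - 4 * a i1 := by
    have : (a iL : ℝ) ≤ 5 * (h:ℝ) + 5 - 4 * (a i1 : ℝ) := by linarith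
    exact_mod_cast this
  by_cases hexc : a iL = a i1 + 2
  · right
    refine ⟨a i1, by omega, by omega, ?_⟩
    funext i
    rcases tri hd i with h0i | hmid | hLi
    · have hii : i = i0 := Fin.ext (by omega)
      subst hii
      simp only [ujp, Pi.add_apply, Pi.smul_apply, smul_eq_mul, eOne, eMid, eD, eV]
      split_ifs <;> omega
    · have := hall i hmid.1 hmid.2
      simp only [ujp, Pi.add_apply, Pi.smul_apply, smul_eq_mul, eOne, eMid, eD, eV]
      split_ifs <;> omega
    · have hii : i = iL := Fin.ext (by omega)
      subst hii
      simp only [ujp, Pi.add_apply, Pi.smul_apply, smul_eq_mul, eOne, eMid, eD, eV]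
      split_ifs <;> omega
  · left
    have v7 : eOne d + (0:ℤ) • eMid d + (4:ℤ) • eD d ∈ PhdVerts h d := by
      have he : eOne d + (0:ℤ) • eMid d + (4:ℤ) • eD d = eOne d + (4:ℤ) • eD d := by
        funext i; simp
      rw [he]; exact u7_mem
    have v8 : eOne d + (0:ℤ) • eMid d + (5:ℤ) • eD d ∈ PhdVerts h d := by
      have he : eOne d + (0:ℤ) • eMid d + (5:ℤ) • eD d = eOne d + (5:ℤ) • eD d := by
        funext i; simp
      rw [he]; exact u8_mem
    have v9 : eOne d + (1:ℤ) • eMid d + (0:ℤ) • eD d ∈ PhdVerts h d := by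
      have he : eOne d + (1:ℤ) • eMid d + (0:ℤ) • eD d = eOne d + eMid d := by
        funext i; simp
      rw [he]; exact u9_mem
    have v10 : eOne d + (1:ℤ) • eMid d + (1:ℤ) • eD d ∈ PhdVerts h d := by
      have he : eOne d + (1:ℤ) • eMid d + (1:ℤ) • eD d = eOne d + eMid d + eD d := by
        funext i; simp
      rw [he]; exact u10_mem
    have hfin : ∀ (j w g r : ℤ), castPt (j • eMid d + w • eD d) ∈ Phd h d →
        (eOne d + g • eMid d + r • eD d) ∈ PhdVerts h d →
        j + g = a i1 → w + r = a iL →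
        ∃ a₀ a₁ : Fin d → ℤ,
          castPt a₀ ∈ Phd h d ∩ {x : Fin d → ℝ | x ⟨0, by omega⟩ = 0} ∧
          castPt a₁ ∈ Phd h d ∩ {x : Fin d → ℝ | x ⟨0, by omega⟩ = 1} ∧
          a = a₀ + a₁ := by
      intro j w g r hmem hvert hjg hwr
      refine ⟨j • eMid d + w • eD d, eOne d + g • eMid d + r • eD d,
        ⟨hmem, slice_mid hd j w⟩, ⟨vert_mem hvert, ?_⟩, ?_⟩
      · show castPt (eOne d + g • eMid d + r • eD d) ⟨0, by omega⟩ = 1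
        simp only [castPt, Pi.add_apply, Pi.smul_apply, smul_eq_mul, eOne, eMid, eD, eV]
        split_ifs <;> first | (exfalso; omega) | norm_num
      · funext i
        rcases tri hd i with h0i | hmid | hLi
        · have hii : i = i0 := Fin.ext (by omega)
          subst hii
          simp only [Pi.add_apply, Pi.smul_apply, smul_eq_mul, eOne, eMid, eD, eV]
          split_ifs <;> omega
        · have := hall i hmid.1 hmid.2
          simp only [Pi.add_apply, Pi.smul_apply, smul_eq_mul, eOne, eMid, eD, eV]
          split_ifs <;> omega
        · have hii : i = iL := Fin.ext (by omega)
          subst hii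
          simp only [Pi.add_apply, Pi.smul_apply, smul_eq_mul, eOne, eMid, eD, eV]
          split_ifs <;> omega
    rcases (by omega : a iL = a i1 - 2 ∨ a iL = a i1 - 1 ∨ a iL = a i1 ∨ a iL = a i1 + 1 ∨
        a iL = a i1 + 3 ∨ a iL = a i1 + 4 ∨ a iL = a i1 + 5 ∨ a iL = a i1 + 6)
      with hz | hz | hz | hz | hz | hz | hz | hz
    · exact hfin (a i1 - 1) (a i1 - 1 - 1) 1 0
        (M3 hh hd (by omega) (by omega)) v9 (by omega) (by omega)
    · exact hfin (a i1 - 1) (a i1 - 1) 1 0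
        (M1 hh hd (by omega) (by omega)) v9 (by omega) (by omega)
    · exact hfin (a i1 - 1) (a i1 - 1) 1 1
        (M1 hh hd (by omega) (by omega)) v10 (by omega) (by omega)
    · exact hfin (a i1 - 1) (a i1 - 1 + 1) 1 1
        (M2 hh hd (by omega) (by omega)) v10 (by omega) (by omega)
    · exact hfin (a i1) (a i1 - 1) 0 4
        (M3 hh hd (by omega) (by omega)) v7 (by omega) (by omega)
    · exact hfin (a i1) (a i1) 0 4
        (M1 hh hd (by omega) (by omega)) v7 (by omega) (by omega)
    · exact hfin (a i1) (a i1) 0 5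
        (M1 hh hd (by omega) (by omega)) v8 (by omega) (by omega)
    · exact hfin (a i1) (a i1 + 1) 0 5
        (M2 hh hd (by omega) (by omega)) v8 (by omega) (by omega)

end main

theorem stmt_15 (h d : ℕ) (hh : 3 ≤ h) (hd : 3 ≤ d) :
    ∀ a : Fin d → ℤ,
      castPt a ∈ ((2 : ℝ) • Phd h d) ∩ {x : Fin d → ℝ | x ⟨0, by omega⟩ = 1} →
      (∃ a₀ a₁ : Fin d → ℤ,
        castPt a₀ ∈ Phd h d ∩ {x : Fin d → ℝ | x ⟨0, by omega⟩ = 0} ∧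
        castPt a₁ ∈ Phd h d ∩ {x : Fin d → ℝ | x ⟨0, by omega⟩ = 1} ∧
        a = a₀ + a₁) ∨
      (∃ j : ℤ, 1 ≤ j ∧ j ≤ (h : ℤ) ∧ a = ujp d j) := by
  intro a ha
  obtain ⟨ha2P, ha1⟩ := ha
  rw [Set.mem_smul_set] at ha2P
  obtain ⟨y, hy, hay⟩ := ha2P
  rw [Phd, PhdVerts_eq, Set.image_union,
    convexHull_union (ZP0_nonempty h d) (ZP1_nonempty d), mem_convexJoin] at hy
  obtain ⟨p, hp, q, hq, hseg⟩ := hy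
  obtain ⟨u, v, hu0, hv0', huv, hyuv⟩ := hseg
  set i0 : Fin d := ⟨0, by omega⟩ with hi0def
  have hp0 : p i0 = 0 := pZ0 hh hd hp i0 rfl
  have hq0 : q i0 = 1 := qZ1 hh hd hq i0 rfl
  have ha1' : (a i0 : ℝ) = 1 := ha1
  have hyv : ∀ i, y i = u * p i + v * q i := by
    intro i
    rw [← hyuv]
    simp [Pi.add_apply, Pi.smul_apply, smul_eq_mul]
  have hav : ∀ i, (a i : ℝ) = 2 * y i := by
    intro i
    have := congrFun hay i
    simp only [Pi.smul_apply, smul_eq_mul] at this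
    exact this.symm
  have hvhalf : v = 1 / 2 := by
    have h1 : (a i0 : ℝ) = 2 * (u * p i0 + v * q i0) := by rw [hav i0, hyv i0]
    rw [hp0, hq0, ha1'] at h1
    linarith [h1]
  have huhalf : u = 1 / 2 := by linarith
  have hpq : ∀ i, (a i : ℝ) = p i + q i := by
    intro i
    rw [hav i, hyv i, hvhalf, huhalf]
    ring
  by_cases hall : ∀ i : Fin d, 0 < i.val → i.val < d - 1 → a i = a ⟨1, by omega⟩
  · exact case_eq hh hd a p q hp hq hpq hall
  · left
    push_neg at hall
    obtain ⟨i2, h21, h22, hne⟩ := hall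
    set i1 : Fin d := ⟨1, by omega⟩ with hi1def
    have hv1 : i1.val = 1 := rfl
    have hm1a : 0 < i1.val := by omega
    have hm1b : i1.val < d - 1 := by omega
    have hne' : a i2 ≠ a i1 := hne
    have hnev : i2.val ≠ i1.val := by
      intro hc
      exact hne (by rw [show i2 = i1 from Fin.ext hc])
    have hq21 : q i2 = q i1 := qEq hh hd hq i2 i1 h21 h22 hm1a hm1b
    have d1 : p i2 ≤ p i1 + 1 := pA7 hh hd hp i2 i1 h21 h22 hm1a hm1b hnev
    have d2 : p i1 ≤ p i2 + 1 := pA7 hh hd hp i1 i2 hm1a hm1b h21 h22 (fun hc => hnev hc.symm)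
    have e2 : (a i2 : ℝ) = p i2 + q i2 := hpq i2
    have e1 : (a i1 : ℝ) = p i1 + q i1 := hpq i1
    have hle1 : a i2 ≤ a i1 + 1 := by
      have : (a i2 : ℝ) ≤ (a i1 : ℝ) + 1 := by rw [e1, e2, hq21]; linarith
      exact_mod_cast this
    have hle2 : a i1 ≤ a i2 + 1 := by
      have : (a i1 : ℝ) ≤ (a i2 : ℝ) + 1 := by rw [e1, e2, hq21]; linarith
      exact_mod_cast this
    rcases (by omega : a i2 = a i1 + 1 ∨ a i1 = a i2 + 1) with hstep | hstep
    · exact case_neq hh hd a p q hp hq hpq i1 i2 hm1a hm1b h21 h22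
        (fun hc => hnev hc.symm) hstep
    · exact case_neq hh hd a p q hp hq hpq i2 i1 h21 h22 hm1a hm1b hnev hstep
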